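/- Let f : X → Y be an irreducible perfect map between compact Hausdorff spaces, i.e. a continuous closed surjection with compact fibers such that f(A) ≠ Y for every proper closed subset A ⊆ X. If {A₁,…,Aₙ} is an almost canonical cover of X, then {f(A₁),…,f(Aₙ)} is an almost canonical cover of Y. -/
import Mathlib


universe u v

/-- An almost canonical cover of a topological space: a locally finite closed cover whose
members have nonempty pairwise disjoint interiors such that every nonempty open set meets
the interior of some member. -/
def IsAlmostCanonicalCover {X : Type u} [TopologicalSpace X] {ι : Type v}
    (F : ι → Set X) : Prop :=
  (∀ i, IsClosed (F i)) ∧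
  (⋃ i, F i) = Set.univ ∧
  LocallyFinite F ∧
  (∀ i, (interior (F i)).Nonempty) ∧
  (∀ i j : ι, i ≠ j → interior (F i) ∩ interior (F j) = ∅) ∧
  (∀ V : Set X, IsOpen V → V.Nonempty → ∃ i, (V ∩ interior (F i)).Nonempty)

/-- The image of an almost canonical cover under a perfect irreducible map between
compact Hausdorff spaces is an almost canonical cover. -/
theorem image_almostCanonicalCover {X : Type u} {Y : Type v}
    [TopologicalSpace X] [CompactSpace X] [T2Space X]
    [TopologicalSpace Y] [CompactSpace Y] [T2Space Y]
    (f : X → Y) (hcont : Continuous f) (hsurj : Function.Surjective f)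
    (hclosed : IsClosedMap f) (hfib : ∀ y : Y, IsCompact (f ⁻¹' {y}))
    (hirr : ∀ A : Set X, IsClosed A → A ≠ Set.univ → f '' A ≠ Set.univ)
    {n : ℕ} (A : Fin n → Set X) (h : IsAlmostCanonicalCover A) :
    IsAlmostCanonicalCover (fun i => f '' A i) := by
  obtain ⟨hcl, hcov, hlf, hint, hdisj, hdense⟩ := h
  -- key "small image" lemma
  have key : ∀ U : Set X, IsOpen U → U.Nonempty →
      ∃ W : Set Y, IsOpen W ∧ W.Nonempty ∧ f ⁻¹' W ⊆ U := by
    intro U hU hUne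
    refine ⟨(f '' Uᶜ)ᶜ, (hclosed _ hU.isClosed_compl).isOpen_compl, ?_, ?_⟩
    · refine Set.nonempty_compl.mpr (hirr Uᶜ hU.isClosed_compl ?_)
      intro hc
      obtain ⟨x, hx⟩ := hUne
      exact (hc ▸ (Set.mem_univ x) : x ∈ Uᶜ) hx
    · intro x hx
      by_contra hxU
      exact hx ⟨x, hxU, rfl⟩
  -- pullback lemma
  have pull : ∀ (V : Set Y) (B : Set X), IsOpen V → IsClosed B → V ⊆ f '' B →
      f ⁻¹' V ⊆ B := by
    intro V B hV hB hVB x hx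
    by_contra hxB
    obtain ⟨W, hW, hWne, hWsub⟩ :=
      key (f ⁻¹' V ∩ Bᶜ) ((hV.preimage hcont).inter hB.isOpen_compl) ⟨x, hx, hxB⟩
    obtain ⟨y, hy⟩ := hWne
    obtain ⟨x', hx'⟩ := hsurj y
    have hx'B : x' ∈ f ⁻¹' V ∩ Bᶜ := hWsub (by simp [Set.mem_preimage, hx', hy])
    have hyV : y ∈ V := hx' ▸ hx'B.1
    obtain ⟨a, haB, hay⟩ := hVB hyV
    have : a ∈ f ⁻¹' V ∩ Bᶜ := hWsub (by simp [Set.mem_preimage, hay, hy])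
    exact this.2 haB
  refine ⟨fun i => hclosed _ (hcl i), ?_, ?_, ?_, ?_, ?_⟩
  · apply Set.eq_univ_of_forall
    intro y
    obtain ⟨x, hx⟩ := hsurj y
    have : x ∈ ⋃ i, A i := hcov ▸ Set.mem_univ x
    obtain ⟨i, hi⟩ := Set.mem_iUnion.mp this
    exact Set.mem_iUnion.mpr ⟨i, ⟨x, hi, hx⟩⟩
  · exact locallyFinite_of_finite _
  · intro i
    obtain ⟨W, hW, hWne, hWsub⟩ := key (interior (A i)) isOpen_interior (hint i)
    have hWim : W ⊆ f '' A i := by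
      intro y hy
      obtain ⟨x, hx⟩ := hsurj y
      exact ⟨x, interior_subset (hWsub (by simp [Set.mem_preimage, hx, hy])), hx⟩
    exact hWne.mono (interior_maximal hWim hW)
  · intro i j hij
    by_contra hne
    obtain ⟨y, hyi, hyj⟩ := Set.nonempty_iff_ne_empty.mpr hne
    obtain ⟨x, hx⟩ := hsurj y
    have hUi : f ⁻¹' (interior (f '' A i)) ⊆ A i :=
      pull _ _ isOpen_interior (hcl i) interior_subset
    have hUj : f ⁻¹' (interior (f '' A j)) ⊆ A j :=
      pull _ _ isOpen_interior (hcl j) interior_subset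
    -- the open set f ⁻¹' (int f''Ai ∩ int f''Aj) is nonempty and inside A i ∩ A j
    set U : Set X := f ⁻¹' (interior (f '' A i) ∩ interior (f '' A j)) with hUdef
    have hUopen : IsOpen U := (isOpen_interior.inter isOpen_interior).preimage hcont
    have hUsi : U ⊆ interior (A i) :=
      interior_maximal (fun z hz => hUi hz.1) hUopen
    have hUsj : U ⊆ interior (A j) :=
      interior_maximal (fun z hz => hUj hz.2) hUopen
    have hxU : x ∈ U := by
      simp only [hUdef, Set.mem_preimage, hx]
      exact ⟨hyi, hyj⟩
    have : x ∈ interior (A i) ∩ interior (A j) := ⟨hUsi hxU, hUsj hxU⟩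
    rw [hdisj i j hij] at this
    exact this
  · intro V hV hVne
    obtain ⟨y, hy⟩ := hVne
    obtain ⟨x, hx⟩ := hsurj y
    obtain ⟨k, hk⟩ := hdense (f ⁻¹' V) (hV.preimage hcont)
      ⟨x, by simp [Set.mem_preimage, hx, hy]⟩
    obtain ⟨W, hW, hWne, hWsub⟩ := key _ ((hV.preimage hcont).inter isOpen_interior) hk
    have hWV : W ⊆ V := by
      intro z hz
      obtain ⟨w, hw⟩ := hsurj z
      have := hWsub (show w ∈ f ⁻¹' W by simp [Set.mem_preimage, hw, hz])
      exact hw ▸ this.1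
    have hWim : W ⊆ f '' A k := by
      intro z hz
      obtain ⟨w, hw⟩ := hsurj z
      have := hWsub (show w ∈ f ⁻¹' W by simp [Set.mem_preimage, hw, hz])
      exact ⟨w, interior_subset this.2, hw⟩
    obtain ⟨z, hz⟩ := hWne
    exact ⟨k, z, hWV hz, interior_maximal hWim hW hz⟩
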